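/- arXiv:1210.7549 — 3 statements merged into one kernel-verified Lean document; each statement's English description precedes it below -/
import Mathlib

section
/- Let X be a building of type (W,S) and let σ and σ' be panels of X. If there exist two chambers x, y ∈ σ' with proj_σ(x) ≠ proj_σ(y), then σ and σ' are parallel. -/
noncomputable section

open scoped Classical

namespace RAB

variable {B W : Type*} [Group W] {M : CoxeterMatrix B}

/-- The Coxeter system `cs` is right-angled: the order `m(s,t)` of `s*t` is `2` or `∞`
(infinite order being encoded by `orderOf _ = 0`) for all distinct simple reflections. -/
def IsRightAngled (cs : CoxeterSystem M W) : Prop :=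
  ∀ i j : B, i ≠ j →
    orderOf (cs.simple i * cs.simple j) = 2 ∨ orderOf (cs.simple i * cs.simple j) = 0

/-- The graph on the simple system joining `i, j` whenever `m(s_i, s_j) ≠ 2`. -/
def coxeterGraph (cs : CoxeterSystem M W) : SimpleGraph B where
  Adj i j := i ≠ j ∧ orderOf (cs.simple i * cs.simple j) ≠ 2
  symm := ⟨by
    rintro i j ⟨hij, h2⟩
    refine ⟨hij.symm, fun h => h2 ?_⟩
    have hsc : SemiconjBy (cs.simple i) (cs.simple j * cs.simple i)
        (cs.simple i * cs.simple j) := by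
      unfold SemiconjBy
      group
    rw [← hsc.orderOf_eq (cs.simple i)]
    exact h⟩
  loopless := ⟨fun i h => h.1 rfl⟩

/-- `(W, S)` is irreducible: the graph on `S` joining `s, t` whenever `m(s,t) ≠ 2`
is connected. -/
def IsIrreducible (cs : CoxeterSystem M W) : Prop := (coxeterGraph cs).Connected

/-- `J⊥ = {i ∈ S \ J : m(i,j) = 2 for all j ∈ J}`. -/
def perp (cs : CoxeterSystem M W) (J : Set B) : Set B :=
  {i : B | i ∉ J ∧ ∀ j ∈ J, orderOf (cs.simple i * cs.simple j) = 2}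

/-- The Cayley graph of `W` with respect to the simple system, joining `u ≠ v`
whenever `u⁻¹ * v` is a simple reflection. -/
def cayleyGraph (cs : CoxeterSystem M W) : SimpleGraph W where
  Adj u v := u ≠ v ∧ u⁻¹ * v ∈ Set.range cs.simple
  symm := ⟨by
    rintro u v ⟨huv, i, hi⟩
    refine ⟨huv.symm, i, ?_⟩
    calc cs.simple i = (cs.simple i)⁻¹ := (cs.inv_simple i).symm
      _ = (u⁻¹ * v)⁻¹ := by rw [hi]
      _ = v⁻¹ * u := by group⟩
  loopless := ⟨fun u h => h.1 rfl⟩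

/-- A building of type `(W, S)`, where the Coxeter system with simple system `S`
indexed by `B` is `cs`: a nonempty set `C` of chambers together with a Weyl
distance `δ : C × C → W` satisfying the three building axioms. -/
structure Building (cs : CoxeterSystem M W) (C : Type*) where
  nonempty : Nonempty C
  δ : C → C → W
  delta_eq_one_iff : ∀ x y : C, δ x y = 1 ↔ x = y
  delta_mem_pair : ∀ (x y z : C) (i : B), δ y z = cs.simple i →
    δ x z = δ x y ∨ δ x z = δ x y * cs.simple i
  delta_eq_of_length : ∀ (x y z : C) (i : B), δ y z = cs.simple i →
    cs.length (δ x y * cs.simple i) = cs.length (δ x y) + 1 →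
    δ x z = δ x y * cs.simple i
  exists_delta : ∀ (x y : C) (i : B), ∃ z : C,
    δ y z = cs.simple i ∧ δ x z = δ x y * cs.simple i

namespace Building

variable {C : Type*} {cs : CoxeterSystem M W} (X : Building cs C)

/-- The gallery distance between two chambers. -/
def dist (x y : C) : ℕ := cs.length (X.δ x y)

/-- The residue of type `J` containing the chamber `c`. -/
def Res (J : Set B) (c : C) : Set C :=
  {x : C | X.δ c x ∈ Subgroup.closure (cs.simple '' J)}

/-- `R` is a residue of type `J`. -/
def IsResidueOfType (J : Set B) (R : Set C) : Prop := ∃ c : C, R = X.Res J c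

/-- `R` is a residue. -/
def IsResidue (R : Set C) : Prop := ∃ J : Set B, X.IsResidueOfType J R

/-- `R` is a panel, i.e. a residue of type `{i}` for some `i`. -/
def IsPanel (R : Set C) : Prop := ∃ i : B, X.IsResidueOfType {i} R

/-- `p` is *the* projection of the chamber `c` on the set `R`: the unique chamber
of `R` at minimal gallery distance from `c`. -/
def IsProj (R : Set C) (c p : C) : Prop :=
  p ∈ R ∧ ∀ x ∈ R, x ≠ p → X.dist c p < X.dist c x

/-- The projection of the chamber `c` on `R` (defaulting to `c` in degenerate
situations where no projection exists). -/
def proj (R : Set C) (c : C) : C :=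
  if h : ∃ p : C, X.IsProj R c p then h.choose else c

/-- The projection `proj_R(R') = {proj_R(x) : x ∈ R'}`. -/
def projSet (R R' : Set C) : Set C := X.proj R '' R'

/-- Two sets of chambers (typically residues) are parallel if they project onto
one another. -/
def Parallel (R R' : Set C) : Prop :=
  X.projSet R R' = R ∧ X.projSet R' R = R'

/-- The gallery distance from a chamber to a residue. -/
def distCR (c : C) (R : Set C) : ℕ := X.dist c (X.proj R c)

/-- The gallery distance between two residues. -/
def distRR (R R' : Set C) : ℕ := sInf ((fun x => X.distCR x R') '' R)

/-- The `J`-wing of the chamber `c`: the set of chambers whose projection to the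
`J`-residue of `c` is `c` itself. -/
def wing (J : Set B) (c : C) : Set C := {x : C | X.proj (X.Res J c) x = c}

/-- An apartment: a subset of the chambers in bijection with `W`, the bijection
transporting the Weyl distance to `(u, v) ↦ u⁻¹ * v`. -/
def IsApartment (A : Set C) : Prop :=
  ∃ f : W → C, Function.Injective f ∧ Set.range f = A ∧
    ∀ u v : W, X.δ (f u) (f v) = u⁻¹ * v

/-- The group of type-preserving automorphisms of the building: all permutations
of the chambers preserving the Weyl distance. -/
def autPlus : Subgroup (Equiv.Perm C) where
  carrier := {g : Equiv.Perm C | ∀ x y : C, X.δ (g x) (g y) = X.δ x y}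
  one_mem' := fun _ _ => rfl
  mul_mem' := by
    intro a b ha hb x y
    simp only [Equiv.Perm.mul_apply]
    rw [ha, hb]
  inv_mem' := by
    intro a ha x y
    have h := ha (a⁻¹ x) (a⁻¹ y)
    simpa using h.symm

/-- The subgroup `U_i(c)` of type-preserving automorphisms fixing the `i`-wing
of `c` pointwise. -/
def U (i : B) (c : C) : Subgroup (Equiv.Perm C) :=
  X.autPlus ⊓ fixingSubgroup (Equiv.Perm C) (X.wing {i} c)

/-- The subgroup `V_i(c)` of type-preserving automorphisms fixing the complement of
the `i`-wing of `c` pointwise. -/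
def V (i : B) (c : C) : Subgroup (Equiv.Perm C) :=
  X.autPlus ⊓ fixingSubgroup (Equiv.Perm C) (X.wing {i} c)ᶜ

/-- The building is thick: every panel has at least three chambers. -/
def Thick : Prop := ∀ R : Set C, X.IsPanel R →
  ∃ x ∈ R, ∃ y ∈ R, ∃ z ∈ R, x ≠ y ∧ x ≠ z ∧ y ≠ z

/-- The building is semi-regular: for each `i`, all panels of type `i` have the
same cardinality. -/
def SemiRegular : Prop := ∀ (i : B) (R R' : Set C),
  X.IsResidueOfType {i} R → X.IsResidueOfType {i} R' → Cardinal.mk R = Cardinal.mk R'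

/-- The building is locally finite: every panel is finite. -/
def LocallyFinite : Prop := ∀ R : Set C, X.IsPanel R → R.Finite

/-- The chamber graph of the building: two distinct chambers are joined whenever
their Weyl distance is a simple reflection. -/
def chamberGraph : SimpleGraph C where
  Adj x y := x ≠ y ∧ X.δ x y ∈ Set.range cs.simple ∧ X.δ y x ∈ Set.range cs.simple
  symm := ⟨by rintro x y ⟨h1, h2, h3⟩; exact ⟨h1.symm, h3, h2⟩⟩
  loopless := ⟨fun x h => h.1 rfl⟩

end Building

end RAB
namespace RAB
namespace Building

variable {B W C : Type*} [Group W] {M : CoxeterMatrix B}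
variable {cs : CoxeterSystem M W} (X : Building cs C)

lemma delta_self (x : C) : X.δ x x = 1 := (X.delta_eq_one_iff x x).2 rfl

lemma simple_ne_one' (i : B) : cs.simple i ≠ 1 := by
  intro h
  have h1 := cs.length_simple i
  rw [h, cs.length_one] at h1
  exact absurd h1 (by norm_num)

lemma delta_symm_simple {y z : C} {i : B} (h : X.δ y z = cs.simple i) :
    X.δ z y = cs.simple i := by
  rcases X.delta_mem_pair z y z i h with h1 | h2
  · rw [X.delta_self] at h1
    have : z = y := (X.delta_eq_one_iff z y).1 h1.symm
    subst this
    rw [X.delta_self] at h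
    exact absurd h.symm (simple_ne_one' (cs := cs) i)
  · rw [X.delta_self] at h2
    calc X.δ z y = X.δ z y * (cs.simple i * cs.simple i) := by
          rw [cs.simple_mul_simple_self, mul_one]
      _ = (X.δ z y * cs.simple i) * cs.simple i := by rw [mul_assoc]
      _ = cs.simple i := by rw [← h2, one_mul]

lemma exists_split (x y : C) (i : B) :
    ∃ z : C, X.δ x z = X.δ x y * cs.simple i ∧ X.δ z y = cs.simple i := by
  obtain ⟨z, h1, h2⟩ := X.exists_delta x y i
  exact ⟨z, h2, X.delta_symm_simple h1⟩

lemma delta_trans_aux : ∀ n : ℕ, ∀ x y z : C, cs.length (X.δ y z) ≤ n →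
    cs.length (X.δ x y * X.δ y z) = cs.length (X.δ x y) + cs.length (X.δ y z) →
    X.δ x z = X.δ x y * X.δ y z := by
  intro n
  induction n with
  | zero =>
    intro x y z hn hadd
    have h1 : X.δ y z = 1 := cs.length_eq_zero_iff.1 (Nat.le_zero.1 hn)
    have : y = z := (X.delta_eq_one_iff y z).1 h1
    subst this
    rw [h1, mul_one]
  | succ n ih =>
    intro x y z hn hadd
    by_cases h0 : X.δ y z = 1
    · have : y = z := (X.delta_eq_one_iff y z).1 h0
      subst this
      rw [h0, mul_one]
    · obtain ⟨i, hi⟩ := cs.exists_rightDescent_of_ne_one h0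
      have hi' : cs.length (X.δ y z * cs.simple i) < cs.length (X.δ y z) := hi
      obtain ⟨z', hz'1, hz'2⟩ := X.exists_split y z i
      have hvs : cs.length (X.δ y z * cs.simple i) + 1 = cs.length (X.δ y z) := by
        rcases cs.length_mul_simple (X.δ y z) i with h | h
        · omega
        · exact h
      have hassoc : X.δ x y * (X.δ y z * cs.simple i) = X.δ x y * X.δ y z * cs.simple i :=
        (mul_assoc _ _ _).symm
      have huvs : cs.length (X.δ x y * (X.δ y z * cs.simple i)) =
          cs.length (X.δ x y) + cs.length (X.δ y z * cs.simple i) := by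
        have h1 := cs.length_mul_le (X.δ x y) (X.δ y z * cs.simple i)
        have h2 : cs.length (X.δ x y * (X.δ y z * cs.simple i)) =
            cs.length (X.δ x y * X.δ y z * cs.simple i) := by rw [hassoc]
        rcases cs.length_mul_simple (X.δ x y * X.δ y z) i with h | h <;> omega
      have hxz' : X.δ x z' = X.δ x y * (X.δ y z * cs.simple i) := by
        have := ih x y z' (by rw [hz'1]; omega) (by rw [hz'1]; exact huvs)
        rwa [hz'1] at this
      have heq : X.δ x y * (X.δ y z * cs.simple i) * cs.simple i = X.δ x y * X.δ y z := by
        simp [mul_assoc, cs.simple_mul_simple_self]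
      have hfin : X.δ x z = X.δ x z' * cs.simple i := by
        apply X.delta_eq_of_length x z' z i hz'2
        rw [hxz', heq]
        omega
      rw [hfin, hxz', heq]

lemma delta_trans {x y z : C}
    (hadd : cs.length (X.δ x y * X.δ y z) = cs.length (X.δ x y) + cs.length (X.δ y z)) :
    X.δ x z = X.δ x y * X.δ y z :=
  X.delta_trans_aux (cs.length (X.δ y z)) x y z le_rfl hadd

lemma delta_inv_aux : ∀ n : ℕ, ∀ x y : C, cs.length (X.δ x y) ≤ n →
    X.δ y x = (X.δ x y)⁻¹ := by
  intro n
  induction n with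
  | zero =>
    intro x y hn
    have h1 : X.δ x y = 1 := cs.length_eq_zero_iff.1 (Nat.le_zero.1 hn)
    have : x = y := (X.delta_eq_one_iff x y).1 h1
    subst this
    rw [h1, inv_one]
  | succ n ih =>
    intro x y hn
    by_cases h0 : X.δ x y = 1
    · have : x = y := (X.delta_eq_one_iff x y).1 h0
      subst this
      rw [h0, inv_one]
    · obtain ⟨i, hi⟩ := cs.exists_rightDescent_of_ne_one h0
      have hi' : cs.length (X.δ x y * cs.simple i) < cs.length (X.δ x y) := hi
      obtain ⟨z, hz1, hz2⟩ := X.exists_split x y i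
      have hvs : cs.length (X.δ x y * cs.simple i) + 1 = cs.length (X.δ x y) := by
        rcases cs.length_mul_simple (X.δ x y) i with h | h
        · omega
        · exact h
      have hzx : X.δ z x = (X.δ x y * cs.simple i)⁻¹ := by
        have := ih x z (by rw [hz1]; omega)
        rwa [hz1] at this
      have hyz : X.δ y z = cs.simple i := X.delta_symm_simple hz2
      have h1 : cs.simple i * (X.δ x y * cs.simple i)⁻¹ = (X.δ x y)⁻¹ := by
        simp [mul_inv_rev, cs.inv_simple, ← mul_assoc, cs.simple_mul_simple_self]
      have key : X.δ y x = X.δ y z * X.δ z x := by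
        apply X.delta_trans
        rw [hyz, hzx, h1]
        simp only [cs.length_simple, cs.length_inv]
        omega
      rw [key, hyz, hzx, h1]

lemma delta_inv (x y : C) : X.δ y x = (X.δ x y)⁻¹ :=
  X.delta_inv_aux (cs.length (X.δ x y)) x y le_rfl

end Building
end RAB
namespace RAB
namespace Building

variable {B W C : Type*} [Group W] {M : CoxeterMatrix B}
variable {cs : CoxeterSystem M W} (X : Building cs C)

lemma mem_closure_pair {i : B} {w : W} :
    w ∈ Subgroup.closure (cs.simple '' ({i} : Set B)) ↔ w = 1 ∨ w = cs.simple i := by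
  have himg : cs.simple '' ({i} : Set B) = {cs.simple i} := by simp
  rw [himg]
  constructor
  · intro h
    rw [Subgroup.mem_closure_singleton] at h
    obtain ⟨n, hn⟩ := h
    have h2 : (cs.simple i) ^ (2 : ℤ) = 1 := by
      rw [zpow_two, cs.simple_mul_simple_self]
    rcases Int.even_or_odd n with ⟨k, hk⟩ | ⟨k, hk⟩
    · left
      rw [← hn, hk]
      rw [(by ring : k + k = 2 * k), zpow_mul, h2, one_zpow]
    · right
      rw [← hn, hk]
      rw [zpow_add, zpow_mul, h2, one_zpow, one_mul, zpow_one]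
  · rintro (rfl | rfl)
    · exact Subgroup.one_mem _
    · exact Subgroup.subset_closure rfl

lemma mem_res_iff {i : B} {c z : C} :
    z ∈ X.Res {i} c ↔ X.δ c z = 1 ∨ X.δ c z = cs.simple i := by
  rw [Res, Set.mem_setOf_eq, mem_closure_pair]

lemma self_mem_res {i : B} (c : C) : c ∈ X.Res {i} c :=
  X.mem_res_iff.2 (Or.inl (X.delta_self c))

lemma panel_delta {i : B} {c : C} {u v : C} (hu : u ∈ X.Res {i} c) (hv : v ∈ X.Res {i} c) :
    X.δ u v = 1 ∨ X.δ u v = cs.simple i := by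
  rw [X.mem_res_iff] at hu hv
  have huc : X.δ u c = 1 ∨ X.δ u c = cs.simple i := by
    rcases hu with h | h
    · left; rw [X.delta_inv, h, inv_one]
    · right; rw [X.delta_inv, h, cs.inv_simple]
  rcases hv with h | h
  · have : c = v := (X.delta_eq_one_iff c v).1 h
    subst this
    exact huc
  · rcases X.delta_mem_pair u c v i h with h1 | h1 <;> rcases huc with h2 | h2
    · rw [h1, h2]; left; rfl
    · rw [h1, h2]; right; rfl
    · rw [h1, h2, one_mul]; right; rfl
    · rw [h1, h2, cs.simple_mul_simple_self]; left; rfl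

lemma mem_panel_iff {i : B} {c : C} {u : C} (hu : u ∈ X.Res {i} c) (z : C) :
    z ∈ X.Res {i} c ↔ (X.δ u z = 1 ∨ X.δ u z = cs.simple i) := by
  constructor
  · intro hz; exact X.panel_delta hu hz
  · rintro (h | h)
    · have : u = z := (X.delta_eq_one_iff u z).1 h
      exact this ▸ hu
    · rw [X.mem_res_iff] at hu ⊢
      rcases X.delta_mem_pair c u z i h with h1 | h1 <;> rcases hu with h2 | h2
      · rw [h1, h2]; left; rfl
      · rw [h1, h2]; right; rfl
      · rw [h1, h2, one_mul]; right; rfl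
      · rw [h1, h2, cs.simple_mul_simple_self]; left; rfl

lemma gate_exists {i : B} (c : C) (z : C) :
    ∃ p ∈ X.Res {i} c, ∀ r ∈ X.Res {i} c, r ≠ p →
      X.δ z r = X.δ z p * cs.simple i ∧
      cs.length (X.δ z r) = cs.length (X.δ z p) + 1 := by
  rcases cs.length_mul_simple (X.δ z c) i with hlen | hlen
  · refine ⟨c, X.self_mem_res c, fun r hr hrc => ?_⟩
    have hcr : X.δ c r = cs.simple i := by
      rcases X.panel_delta (X.self_mem_res c) hr with h | h
      · exact absurd ((X.delta_eq_one_iff c r).1 h).symm hrc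
      · exact h
    have h1 : X.δ z r = X.δ z c * cs.simple i :=
      X.delta_eq_of_length z c r i hcr hlen
    exact ⟨h1, by rw [h1]; exact hlen⟩
  · obtain ⟨p, hp1, hp2⟩ := X.exists_delta z c i
    have hpmem : p ∈ X.Res {i} c := X.mem_res_iff.2 (Or.inr hp1)
    refine ⟨p, hpmem, fun r hr hrp => ?_⟩
    have hpr : X.δ p r = cs.simple i := by
      rcases X.panel_delta hpmem hr with h | h
      · exact absurd ((X.delta_eq_one_iff p r).1 h).symm hrp
      · exact h
    have hss : X.δ z p * cs.simple i = X.δ z c := by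
      rw [hp2, mul_assoc, cs.simple_mul_simple_self, mul_one]
    have h1 : X.δ z r = X.δ z p * cs.simple i := by
      apply X.delta_eq_of_length z p r i hpr
      rw [hss, hp2]
      omega
    refine ⟨h1, ?_⟩
    rw [h1, hss, hp2]
    omega

lemma proj_eq_of_isProj {R : Set C} {z p : C} (h : X.IsProj R z p) : X.proj R z = p := by
  have hex : ∃ q, X.IsProj R z q := ⟨p, h⟩
  rw [proj, dif_pos hex]
  by_contra hne
  have hq := hex.choose_spec
  have h1 := h.2 _ hq.1 hne
  have h2 := hq.2 _ h.1 (fun hp => hne hp.symm)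
  omega

lemma gate {i : B} (c : C) (z : C) :
    X.proj (X.Res {i} c) z ∈ X.Res {i} c ∧
    ∀ r ∈ X.Res {i} c, r ≠ X.proj (X.Res {i} c) z →
      X.δ z r = X.δ z (X.proj (X.Res {i} c) z) * cs.simple i ∧
      cs.length (X.δ z r) = cs.length (X.δ z (X.proj (X.Res {i} c) z)) + 1 := by
  obtain ⟨p, hp, hprop⟩ := X.gate_exists (i := i) c z
  have hproj : X.proj (X.Res {i} c) z = p := by
    apply X.proj_eq_of_isProj
    refine ⟨hp, fun r hr hrp => ?_⟩
    have := (hprop r hr hrp).2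
    unfold dist
    omega
  rw [hproj]
  exact ⟨hp, hprop⟩

lemma proj_eq_of_length {i : B} {c : C} {z g : C} (hg : g ∈ X.Res {i} c)
    (hlen : cs.length (X.δ z g * cs.simple i) = cs.length (X.δ z g) + 1) :
    X.proj (X.Res {i} c) z = g := by
  apply X.proj_eq_of_isProj
  refine ⟨hg, fun r hr hrg => ?_⟩
  have hgr : X.δ g r = cs.simple i := by
    rcases X.panel_delta hg hr with h | h
    · exact absurd ((X.delta_eq_one_iff g r).1 h).symm hrg
    · exact h
  have h1 : X.δ z r = X.δ z g * cs.simple i :=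
    X.delta_eq_of_length z g r i hgr hlen
  unfold dist
  rw [h1]
  omega

end Building
end RAB
namespace RAB
namespace Building

variable {B W C : Type*} [Group W] {M : CoxeterMatrix B}
variable {cs : CoxeterSystem M W} (X : Building cs C)

lemma gate' {i : B} (c : C) (z : C) :
    ∃ p, X.proj (X.Res {i} c) z = p ∧ p ∈ X.Res {i} c ∧
    ∀ r ∈ X.Res {i} c, r ≠ p →
      X.δ z r = X.δ z p * cs.simple i ∧
      cs.length (X.δ z r) = cs.length (X.δ z p) + 1 :=
  ⟨_, rfl, (X.gate c z).1, (X.gate c z).2⟩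

lemma panels_parallel_aux {i j : B} {c c' : C} {x y : C}
    (hx : x ∈ X.Res {j} c') (hy : y ∈ X.Res {j} c')
    (hxy : X.proj (X.Res {i} c) x ≠ X.proj (X.Res {i} c) y) :
    X.projSet (X.Res {i} c) (X.Res {j} c') = X.Res {i} c ∧
    X.proj (X.Res {j} c') (X.proj (X.Res {i} c) x) = x ∧
    X.proj (X.Res {j} c') (X.proj (X.Res {i} c) y) = y := by
  obtain ⟨p, hprojx, hpσ, hgx⟩ := X.gate' (i := i) c x
  obtain ⟨q, hprojy, hqσ, hgy⟩ := X.gate' (i := i) c y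
  rw [hprojx, hprojy] at hxy
  have hxyne : x ≠ y := by rintro rfl; exact hxy (hprojx.symm.trans hprojy)
  have hdxy : X.δ x y = cs.simple j := by
    rcases X.panel_delta hx hy with h | h
    · exact absurd ((X.delta_eq_one_iff x y).1 h) hxyne
    · exact h
  have hdyx : X.δ y x = cs.simple j := X.delta_symm_simple hdxy
  obtain ⟨hxq1, hxq2⟩ := hgx q hqσ (Ne.symm hxy)
  obtain ⟨hyp1, hyp2⟩ := hgy p hpσ hxy
  -- left-multiplication dichotomy
  have hF : X.δ x q = X.δ y q ∨ X.δ x q = cs.simple j * X.δ y q := by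
    rcases X.delta_mem_pair q y x j hdyx with h | h
    · left
      rw [X.delta_inv x q, X.delta_inv y q] at h
      exact inv_injective h
    · right
      rw [X.delta_inv x q, X.delta_inv y q] at h
      have := congrArg Inv.inv h
      rw [inv_inv, mul_inv_rev, inv_inv, cs.inv_simple] at this
      exact this
  have hB : X.δ x q = cs.simple j * X.δ y q := by
    rcases hF with hA | hB
    · exfalso
      have e1 : X.δ y p = X.δ x p := by
        rw [hyp1, ← hA, hxq1, mul_assoc, cs.simple_mul_simple_self, mul_one]
      have e3 := congrArg cs.length e1
      rw [hA] at hxq2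
      omega
    · exact hB
  have hv : X.δ y q = cs.simple j * X.δ x q := by
    rw [hB, ← mul_assoc, cs.simple_mul_simple_self, one_mul]
  have hyp3 : X.δ y p = cs.simple j * X.δ x p := by
    rw [hyp1, hv, hxq1]
    simp [mul_assoc, cs.simple_mul_simple_self]
  have e1 := congrArg cs.length hyp3
  have e2 := congrArg cs.length hv
  have d1 := cs.length_simple_mul (X.δ x p) j
  have d2 := cs.length_simple_mul (X.δ x q) j
  have Ltw : cs.length (cs.simple j * X.δ x p) = cs.length (X.δ x p) + 1 := by omega
  have Lyq : cs.length (X.δ y q) = cs.length (X.δ x p) := by omega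
  have goal2 : X.proj (X.Res {j} c') p = x := by
    apply X.proj_eq_of_length hx
    rw [X.delta_inv x p]
    have h2 : cs.length ((X.δ x p)⁻¹ * cs.simple j) = cs.length (cs.simple j * X.δ x p) := by
      rw [← cs.length_inv]
      congr 1
      simp [mul_inv_rev, cs.inv_simple]
    rw [h2, cs.length_inv, Ltw]
  have goal3 : X.proj (X.Res {j} c') q = y := by
    apply X.proj_eq_of_length hy
    rw [X.delta_inv y q]
    have h2 : (X.δ y q)⁻¹ * cs.simple j = (X.δ x q)⁻¹ := by
      rw [hv]
      simp [mul_inv_rev, cs.inv_simple, mul_assoc, cs.simple_mul_simple_self]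
    rw [h2, cs.length_inv, cs.length_inv, hxq2, Lyq]
  have goal1 : X.projSet (X.Res {i} c) (X.Res {j} c') = X.Res {i} c := by
    apply Set.Subset.antisymm
    · rintro r ⟨z, hz, rfl⟩
      exact (X.gate c z).1
    · intro r hr
      by_cases hrp : r = p
      · exact ⟨x, hx, by rw [hprojx, hrp]⟩
      · obtain ⟨hxr1, hxr2⟩ := hgx r hr hrp
        obtain ⟨z, hz1, hz2⟩ := X.exists_split r x j
        have hzmem : z ∈ X.Res {j} c' :=
          (X.mem_panel_iff hx z).2 (Or.inr (X.delta_symm_simple hz2))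
        have hzr : X.δ z r = cs.simple j * X.δ x r := by
          rw [X.delta_inv r z, hz1, X.delta_inv x r]
          simp [mul_inv_rev, cs.inv_simple]
        refine ⟨z, hzmem, ?_⟩
        apply X.proj_eq_of_length hr
        have h3 : X.δ z r * cs.simple i = cs.simple j * X.δ x p := by
          rw [hzr, hxr1]
          simp [mul_assoc, cs.simple_mul_simple_self]
        have h4 : cs.length (X.δ z r) = cs.length (X.δ x p) := by
          have h5 : X.δ z r = cs.simple j * X.δ x q := by rw [hzr, hxr1, hxq1]
          rw [h5, ← hv, Lyq]
        rw [h3, Ltw, h4]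
  exact ⟨goal1, by rw [hprojx]; exact goal2, by rw [hprojy]; exact goal3⟩

end Building
end RAB

/-- If two chambers of a panel `σ'` have distinct projections on a panel
`σ`, then `σ` and `σ'` are parallel. -/
theorem statement5 {B W C : Type*} [Fintype B] [Group W] {M : CoxeterMatrix B}
    (cs : CoxeterSystem M W) (X : RAB.Building cs C)
    (σ σ' : Set C) (hσ : X.IsPanel σ) (hσ' : X.IsPanel σ')
    (x y : C) (hx : x ∈ σ') (hy : y ∈ σ') (hxy : X.proj σ x ≠ X.proj σ y) :
    X.Parallel σ σ' := by
  obtain ⟨i, c, hc⟩ := hσ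
  obtain ⟨j, c', hc'⟩ := hσ'
  subst hc
  subst hc'
  obtain ⟨h1, hpx, hqy⟩ := X.panels_parallel_aux hx hy hxy
  have hxyne : x ≠ y := fun h => hxy (by rw [h])
  have hp : X.proj (X.Res {i} c) x ∈ X.Res {i} c := (X.gate c x).1
  have hq : X.proj (X.Res {i} c) y ∈ X.Res {i} c := (X.gate c y).1
  have hne : X.proj (X.Res {j} c') (X.proj (X.Res {i} c) x) ≠
      X.proj (X.Res {j} c') (X.proj (X.Res {i} c) y) := by
    rw [hpx, hqy]; exact hxyne
  obtain ⟨h2, -, -⟩ := X.panels_parallel_aux hp hq hne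
  exact ⟨h1, h2⟩
end
end

section
/- Let X be a right-angled building of type (W,S), let σ be a panel of type i ∈ S, and let c ≠ c' be two chambers of σ. Let g ∈ Aut(X)⁺ be such that δ(c', g(c)) = j for some j ∈ S with m(i,j) = ∞. Let h ∈ Aut(X)⁺ be an element of the product ∏_{d ∈ σ\{c,c'}} V_i(d), i.e. h fixes X_i(c) ∪ X_i(c') pointwise and, for each d ∈ σ \ {c,c'}, the map agreeing with h on X_i(d) and with the identity elsewhere belongs to V_i(d). Then there exists x ∈ Aut(X)⁺ such that h = x g x⁻¹ g⁻¹. -/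
noncomputable section

open scoped Classical

namespace S16Aux

open CoxeterSystem List

variable {B W : Type*} [Group W] {M : CoxeterMatrix B} (cs : CoxeterSystem M W)

/-- indicator function -/
def ind (a : W) : W → ZMod 2 := fun t => if t = a then 1 else 0

/-- the conjugation action of `W` on `Multiplicative (W → ZMod 2)` -/
def actAut (u : W) : MulAut (Multiplicative (W → ZMod 2)) where
  toFun f := Multiplicative.ofAdd (fun t => Multiplicative.toAdd f (u⁻¹ * t * u))
  invFun f := Multiplicative.ofAdd (fun t => Multiplicative.toAdd f (u * t * u⁻¹))
  left_inv f := by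
    apply Multiplicative.toAdd.injective
    funext t
    simp [mul_assoc]
  right_inv f := by
    apply Multiplicative.toAdd.injective
    funext t
    simp [mul_assoc]
  map_mul' f g := by
    apply Multiplicative.toAdd.injective
    funext t
    rfl

def phi : W →* MulAut (Multiplicative (W → ZMod 2)) where
  toFun := actAut
  map_one' := by
    apply MulEquiv.ext
    intro f
    apply Multiplicative.toAdd.injective
    funext t
    simp [actAut]
  map_mul' u v := by
    apply MulEquiv.ext
    intro f
    apply Multiplicative.toAdd.injective
    funext t
    simp [actAut, mul_assoc]

lemma phi_apply (u : W) (f : Multiplicative (W → ZMod 2)) (t : W) :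
    Multiplicative.toAdd (phi u f) t = Multiplicative.toAdd f (u⁻¹ * t * u) := rfl

abbrev NG (W : Type*) [Group W] := Multiplicative (W → ZMod 2) ⋊[phi] W

def gen (k : B) : NG W := ⟨Multiplicative.ofAdd (ind (cs.simple k)), cs.simple k⟩

lemma right_pow (x : NG W) (m : ℕ) : (x ^ m).right = x.right ^ m := by
  induction m with
  | zero => simp
  | succ m ih => rw [pow_succ, SemidirectProduct.mul_right, ih, pow_succ]

lemma left_pow (x : NG W) (m : ℕ) :
    (x ^ m).left = ∏ k ∈ Finset.range m, phi (x.right ^ k) x.left := by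
  induction m with
  | zero => simp
  | succ m ih =>
      rw [pow_succ, SemidirectProduct.mul_left, ih, Finset.prod_range_succ, right_pow]

lemma zmod2_add_self (z : ZMod 2) : z + z = 0 := by
  fin_cases z <;> decide

lemma liftable : M.IsLiftable (gen cs) := by
  intro i i'
  set a := cs.simple i with ha
  set b := cs.simple i' with hb
  set m := M i i' with hm
  have haa : a * a = 1 := cs.simple_mul_simple_self i
  have hbb : b * b = 1 := cs.simple_mul_simple_self i'
  have hainv : a⁻¹ = a := cs.inv_simple i
  have hbinv : b⁻¹ = b := cs.inv_simple i'
  have hcm : (a * b) ^ m = 1 := cs.simple_mul_simple_pow i i'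
  set c := a * b with hc
  have hconj : ∀ k : ℕ, a * c ^ k * a = (c⁻¹) ^ k := by
    intro k
    have h1 : a * c * a⁻¹ = c⁻¹ := by
      rw [hainv, hc, mul_inv_rev, hainv, hbinv]
      calc a * (a * b) * a = (a * a) * b * a := by group
        _ = b * a := by rw [haa, one_mul]
    calc a * c ^ k * a = a * c ^ k * a⁻¹ := by rw [hainv]
      _ = (MulAut.conj a) (c ^ k) := by simp [MulAut.conj_apply]
      _ = ((MulAut.conj a) c) ^ k := by rw [map_pow]
      _ = (a * c * a⁻¹) ^ k := by simp [MulAut.conj_apply]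
      _ = (c⁻¹) ^ k := by rw [h1]
  have hconj' : ∀ k : ℕ, a * (c ^ k)⁻¹ * a = c ^ k := by
    intro k
    calc a * (c ^ k)⁻¹ * a = (a * c ^ k * a)⁻¹ := by
          rw [mul_inv_rev, mul_inv_rev, hainv]; group
      _ = ((c⁻¹) ^ k)⁻¹ := by rw [hconj k]
      _ = c ^ k := by group
  have claim1 : ∀ k : ℕ, c ^ k * a * (c ^ k)⁻¹ = c ^ (2 * k) * a := by
    intro k
    have e1 : c ^ k * (a * (c ^ k)⁻¹ * a) * a = c ^ k * a * (c ^ k)⁻¹ * (a * a) := by group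
    calc c ^ k * a * (c ^ k)⁻¹ = c ^ k * a * (c ^ k)⁻¹ * (a * a) := by rw [haa, mul_one]
      _ = c ^ k * (a * (c ^ k)⁻¹ * a) * a := e1.symm
      _ = c ^ k * c ^ k * a := by rw [hconj' k]
      _ = c ^ (2 * k) * a := by rw [two_mul, pow_add]
  have claim2 : ∀ k : ℕ, c ^ k * (a * b * a) * (c ^ k)⁻¹ = c ^ (2 * k + 1) * a := by
    intro k
    have e0 : c ^ k * (a * b * a) * (c ^ k)⁻¹ = c ^ (k + 1) * (a * (c ^ k)⁻¹ * a) * a⁻¹ := by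
      rw [pow_succ, hc]; group
    calc c ^ k * (a * b * a) * (c ^ k)⁻¹ = c ^ (k + 1) * (a * (c ^ k)⁻¹ * a) * a⁻¹ := e0
      _ = c ^ (k + 1) * (a * (c ^ k)⁻¹ * a) * a := by rw [hainv]
      _ = c ^ (k + 1) * c ^ k * a := by rw [hconj' k]
      _ = c ^ (2 * k + 1) * a := by rw [← pow_add, show k + 1 + k = 2 * k + 1 by ring]
  rcases Nat.eq_zero_or_pos m with hm0 | _
  · rw [hm0, pow_zero]
  apply SemidirectProduct.ext
  · rw [left_pow]
    show _ = (1 : NG W).left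
    rw [SemidirectProduct.one_left]
    have hright : (gen cs i * gen cs i').right = c := rfl
    rw [hright]
    apply Multiplicative.toAdd.injective
    rw [toAdd_prod]
    funext t
    rw [Finset.sum_apply]
    have hterm : ∀ k : ℕ,
        Multiplicative.toAdd (phi (c ^ k) (gen cs i * gen cs i').left) t
          = (if t = c ^ (2 * k) * a then (1 : ZMod 2) else 0)
            + (if t = c ^ (2 * k + 1) * a then (1 : ZMod 2) else 0) := by
      intro k
      rw [phi_apply]
      have hlft : Multiplicative.toAdd ((gen cs i * gen cs i').left)
          = fun u => ind a u + ind (a * b * a) u := by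
        funext u
        rw [SemidirectProduct.mul_left, toAdd_mul]
        show ind a u + Multiplicative.toAdd (phi a (Multiplicative.ofAdd (ind b))) u = _
        rw [phi_apply, toAdd_ofAdd]
        congr 1
        unfold ind
        rw [hainv]
        by_cases hcase : u = a * b * a
        · rw [if_pos hcase, if_pos]
          rw [hcase]
          calc a * (a * b * a) * a = (a * a) * b * (a * a) := by group
            _ = b := by rw [haa]; group
        · rw [if_neg hcase, if_neg]
          intro hx
          apply hcase
          have : a * (a * u * a) * a = a * b * a := by rw [hx]
          calc u = (a * a) * u * (a * a) := by rw [haa]; group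
            _ = a * (a * u * a) * a := by group
            _ = a * b * a := this
      rw [hlft]
      show ind a ((c ^ k)⁻¹ * t * c ^ k) + ind (a * b * a) ((c ^ k)⁻¹ * t * c ^ k) = _
      congr 1
      · unfold ind
        congr 1
        rw [eq_iff_iff]
        constructor
        · intro hx
          have : c ^ k * ((c ^ k)⁻¹ * t * c ^ k) * (c ^ k)⁻¹ = c ^ k * a * (c ^ k)⁻¹ := by
            rw [hx]
          rw [claim1] at this
          rw [← this]; group
        · intro hx
          rw [hx, ← claim1]; group
      · unfold ind
        congr 1
        rw [eq_iff_iff]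
        constructor
        · intro hx
          have : c ^ k * ((c ^ k)⁻¹ * t * c ^ k) * (c ^ k)⁻¹ = c ^ k * (a * b * a) * (c ^ k)⁻¹ := by
            rw [hx]
          rw [claim2] at this
          rw [← this]; group
        · intro hx
          rw [hx, ← claim2]; group
    rw [Finset.sum_congr rfl (fun k _ => hterm k)]
    -- now pure counting
    have hpair : ∀ n : ℕ, (∑ k ∈ Finset.range n,
        ((if t = c ^ (2 * k) * a then (1 : ZMod 2) else 0)
          + (if t = c ^ (2 * k + 1) * a then (1 : ZMod 2) else 0)))
        = ∑ r ∈ Finset.range (2 * n), (if t = c ^ r * a then (1 : ZMod 2) else 0) := by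
      intro n
      induction n with
      | zero => simp
      | succ n ih =>
          rw [Finset.sum_range_succ, ih, show 2 * (n + 1) = (2 * n + 1) + 1 by ring,
            Finset.sum_range_succ, Finset.sum_range_succ]
          ring
    rw [hpair, two_mul, Finset.sum_range_add]
    have hshift : ∀ k ∈ Finset.range m,
        (if t = c ^ (m + k) * a then (1 : ZMod 2) else 0)
          = (if t = c ^ k * a then (1 : ZMod 2) else 0) := by
      intro k _
      congr 2
      rw [pow_add, hcm, one_mul]
    rw [Finset.sum_congr rfl hshift, ← Finset.sum_add_distrib]
    rw [Finset.sum_congr rfl (fun k _ => zmod2_add_self _), Finset.sum_const_zero]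
    rfl
  · rw [right_pow]
    show c ^ m = (1 : NG W).right
    rw [SemidirectProduct.one_right, hcm]

/-- The parity cocycle. -/
def theN : W → W → ZMod 2 :=
  fun w => Multiplicative.toAdd ((CoxeterSystem.lift cs ⟨gen cs, liftable cs⟩ w).left)

lemma theta_right (w : W) : (CoxeterSystem.lift cs ⟨gen cs, liftable cs⟩ w).right = w := by
  have : (SemidirectProduct.rightHom.comp (CoxeterSystem.lift cs ⟨gen cs, liftable cs⟩))
      = MonoidHom.id W := by
    apply cs.ext_simple
    intro k
    simp only [MonoidHom.comp_apply, MonoidHom.id_apply]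
    rw [cs.lift_apply_simple]
    rfl
  exact DFunLike.congr_fun this w

lemma theN_mul (u v : W) (t : W) :
    theN cs (u * v) t = theN cs u t + theN cs v (u⁻¹ * t * u) := by
  unfold theN
  rw [map_mul, SemidirectProduct.mul_left, toAdd_mul, theta_right]
  rfl

lemma theN_simple (k : B) (t : W) :
    theN cs (cs.simple k) t = if t = cs.simple k then 1 else 0 := by
  unfold theN
  rw [cs.lift_apply_simple]
  rfl

lemma theN_wordProd (ω : List B) (t : W) :
    theN cs (cs.wordProd ω) t = ((cs.leftInvSeq ω).count t : ZMod 2) := by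
  induction ω generalizing t with
  | nil =>
      rw [cs.wordProd_nil]
      unfold theN
      rw [map_one]
      simp
  | cons k ω ih =>
      rw [cs.wordProd_cons, theN_mul, theN_simple, cs.inv_simple]
      have hlis : cs.leftInvSeq (k :: ω)
          = cs.simple k :: List.map (MulAut.conj (cs.simple k)) (cs.leftInvSeq ω) := rfl
      rw [hlis, List.count_cons]
      have hmap : (List.map (⇑(MulAut.conj (cs.simple k))) (cs.leftInvSeq ω)).count t
          = (cs.leftInvSeq ω).count (cs.simple k * t * cs.simple k) := by
        have hinj : Function.Injective (⇑(MulAut.conj (cs.simple k)) : W → W) :=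
          (MulAut.conj (cs.simple k)).injective
        have hfx : (MulAut.conj (cs.simple k)) (cs.simple k * t * cs.simple k) = t := by
          rw [MulAut.conj_apply, cs.inv_simple]
          calc cs.simple k * (cs.simple k * t * cs.simple k) * cs.simple k
              = (cs.simple k * cs.simple k) * t * (cs.simple k * cs.simple k) := by group
            _ = t := by rw [cs.simple_mul_simple_self]; group
        calc (List.map (⇑(MulAut.conj (cs.simple k))) (cs.leftInvSeq ω)).count t
            = (List.map (⇑(MulAut.conj (cs.simple k))) (cs.leftInvSeq ω)).count
                ((MulAut.conj (cs.simple k)) (cs.simple k * t * cs.simple k)) := by rw [hfx]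
          _ = (cs.leftInvSeq ω).count (cs.simple k * t * cs.simple k) :=
              List.count_map_of_injective _ _ hinj _
      rw [ih, hmap, Nat.cast_add, add_comm]
      congr 1
      by_cases hcase : t = cs.simple k
      · simp [hcase]
      · rw [if_neg hcase, if_neg (fun hx => hcase (eq_comm.mp (beq_iff_eq.mp hx)))]
        simp


/-- exchange-flavoured: a left descent letter appears in the left inversion
sequence of every reduced word. -/
lemma descent_mem_leftInvSeq {w : W} {k : B} (hd : cs.IsLeftDescent w k)
    {ω : List B} (hred : cs.IsReduced ω) (hw : w = cs.wordProd ω) :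
    cs.simple k ∈ cs.leftInvSeq ω := by
  classical
  -- first show the parity cocycle is 1 at (w, s k)
  have hN : theN cs w (cs.simple k) = 1 := by
    obtain ⟨χ, hχred, hχ⟩ := cs.exists_reduced_word' (cs.simple k * w)
    have hw2 : w = cs.wordProd (k :: χ) := by
      rw [cs.wordProd_cons, ← hχ, cs.simple_mul_simple_cancel_left]
    have hlen : cs.length (cs.simple k * w) + 1 = cs.length w := cs.isLeftDescent_iff.mp hd
    have hred2 : cs.IsReduced (k :: χ) := by
      unfold CoxeterSystem.IsReduced at hχred ⊢
      rw [← hw2, List.length_cons, ← hχred, ← hχ]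
      omega
    have hnodup : (cs.leftInvSeq (k :: χ)).Nodup := hred2.nodup_leftInvSeq
    have hcount : (cs.leftInvSeq (k :: χ)).count (cs.simple k) = 1 := by
      have hmem : cs.simple k ∈ cs.leftInvSeq (k :: χ) := by
        have : cs.leftInvSeq (k :: χ)
            = cs.simple k :: List.map (⇑(MulAut.conj (cs.simple k))) (cs.leftInvSeq χ) := rfl
        rw [this]
        exact List.mem_cons_self
      have h1 : 1 ≤ (cs.leftInvSeq (k :: χ)).count (cs.simple k) :=
        List.count_pos_iff.mpr hmem
      have h2 : (cs.leftInvSeq (k :: χ)).count (cs.simple k) ≤ 1 :=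
        List.nodup_iff_count_le_one.mp hnodup _
      omega
    rw [hw2, theN_wordProd, hcount]
    rfl
  -- now transfer to ω
  rw [hw] at hN
  rw [theN_wordProd] at hN
  have : (cs.leftInvSeq ω).count (cs.simple k) ≠ 0 := by
    intro h0
    rw [h0] at hN
    simp at hN
  exact List.count_pos_iff.mp (Nat.pos_of_ne_zero this)

/-- the exchange property for reduced words. -/
lemma exchange {w : W} {k : B} (hd : cs.IsLeftDescent w k)
    {ω : List B} (hred : cs.IsReduced ω) (hw : w = cs.wordProd ω) :
    ∃ r, r < ω.length ∧ cs.simple k * w = cs.wordProd (ω.eraseIdx r)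
      ∧ (cs.leftInvSeq ω).getD r 1 = cs.simple k := by
  have hmem := descent_mem_leftInvSeq cs hd hred hw
  obtain ⟨r, hr, hEq⟩ := List.mem_iff_getElem.mp hmem
  rw [cs.length_leftInvSeq] at hr
  have hgetD : (cs.leftInvSeq ω).getD r 1 = cs.simple k := by
    rw [List.getD_eq_getElem _ 1 (by rwa [cs.length_leftInvSeq])]
    exact hEq
  refine ⟨r, hr, ?_, hgetD⟩
  rw [hw, ← cs.getD_leftInvSeq_mul_wordProd ω r, hgetD]

/-! ### alternating words -/

/-- the alternating word `[x, y, x, y, ...]` of length `m`. -/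
def myAlt : B → B → ℕ → List B
  | _, _, 0 => []
  | x, y, (m+1) => x :: myAlt y x m

lemma myAlt_length (x y : B) (m : ℕ) : (myAlt x y m).length = m := by
  induction m generalizing x y with
  | zero => rfl
  | succ m ih => simp [myAlt, ih]

lemma myAlt_take {q m : ℕ} (hq : q ≤ m) (x y : B) :
    (myAlt x y m).take q = myAlt x y q := by
  induction q generalizing x y m with
  | zero => simp [myAlt]
  | succ q ih =>
      cases m with
      | zero => omega
      | succ m =>
          show (x :: myAlt y x m).take (q+1) = x :: myAlt y x q
          rw [List.take_succ_cons, ih (by omega) y x]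

/-- the letter of the alternating word at position `q`. -/
def altL (x y : B) (q : ℕ) : B := if q % 2 = 0 then x else y

lemma altL_succ (x y : B) (q : ℕ) : altL x y (q + 1) = altL y x q := by
  unfold altL
  rcases Nat.mod_two_eq_zero_or_one q with h | h
  · rw [if_neg (by omega), if_pos h]
  · rw [if_pos (by omega), if_neg (by omega)]

lemma myAlt_get {q m : ℕ} (hq : q < m) (x y : B) :
    (myAlt x y m)[q]? = some (altL x y q) := by
  induction q generalizing x y m with
  | zero =>
      cases m with
      | zero => omega
      | succ m => simp [myAlt, altL]
  | succ q ih =>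
      cases m with
      | zero => omega
      | succ m =>
          show (x :: myAlt y x m)[q+1]? = _
          rw [List.getElem?_cons_succ, ih (by omega) y x, altL_succ]

lemma myAlt_entry (q : ℕ) (x y : B) :
    cs.wordProd (myAlt x y q) * cs.simple (altL x y q) * (cs.wordProd (myAlt x y q))⁻¹
      = (cs.simple x * cs.simple y) ^ q * cs.simple x := by
  induction q generalizing x y with
  | zero => simp [myAlt, altL]
  | succ q ih =>
      have hcons : cs.wordProd (myAlt x y (q+1)) = cs.simple x * cs.wordProd (myAlt y x q) := by
        show cs.wordProd (x :: myAlt y x q) = _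
        rw [cs.wordProd_cons]
      rw [hcons, altL_succ]
      have hsemi : SemiconjBy (cs.simple x) ((cs.simple y * cs.simple x) ^ q)
          ((cs.simple x * cs.simple y) ^ q) := by
        apply SemiconjBy.pow_right
        unfold SemiconjBy
        group
      calc cs.simple x * cs.wordProd (myAlt y x q) * cs.simple (altL y x q)
            * (cs.simple x * cs.wordProd (myAlt y x q))⁻¹
          = cs.simple x * (cs.wordProd (myAlt y x q) * cs.simple (altL y x q)
              * (cs.wordProd (myAlt y x q))⁻¹) * (cs.simple x)⁻¹ := by group
        _ = cs.simple x * ((cs.simple y * cs.simple x) ^ q * cs.simple y) * (cs.simple x)⁻¹ := by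
              rw [ih]
        _ = (cs.simple x * (cs.simple y * cs.simple x) ^ q) * cs.simple y * (cs.simple x)⁻¹ := by
              group
        _ = ((cs.simple x * cs.simple y) ^ q * cs.simple x) * cs.simple y * (cs.simple x)⁻¹ := by
              rw [hsemi.eq]
        _ = (cs.simple x * cs.simple y) ^ (q+1) * (cs.simple x)⁻¹ := by
              rw [pow_succ]; group
        _ = (cs.simple x * cs.simple y) ^ (q+1) * cs.simple x := by rw [cs.inv_simple]

lemma eraseIdx_append_right {α : Type*} (l₁ l₂ : List α) (k : ℕ) :
    (l₁ ++ l₂).eraseIdx (l₁.length + k) = l₁ ++ l₂.eraseIdx k := by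
  induction l₁ with
  | nil => simp
  | cons a l ih => simp [List.eraseIdx, ih, Nat.succ_add]

/-- The key Coxeter-theoretic lemma: if `m i j = ∞` then no element has both
`i` and `j` as left descents. -/
lemma noTwoLeftDescents {i j : B} (hij : orderOf (cs.simple i * cs.simple j) = 0)
    (w : W) : ¬(cs.IsLeftDescent w i ∧ cs.IsLeftDescent w j) := by
  classical
  rintro ⟨di, dj⟩
  have hjio : orderOf (cs.simple j * cs.simple i) = 0 := by
    have hsc : SemiconjBy (cs.simple i) (cs.simple j * cs.simple i)
        (cs.simple i * cs.simple j) := by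
      unfold SemiconjBy; group
    rw [hsc.orderOf_eq (cs.simple i)]
    exact hij
  have horder : ∀ x y : B, ((x = i ∧ y = j) ∨ (x = j ∧ y = i)) →
      orderOf (cs.simple x * cs.simple y) = 0 := by
    rintro x y (⟨hx, hy⟩ | ⟨hx, hy⟩) <;> rw [hx, hy]
    · exact hij
    · exact hjio
  have key : ∀ m : ℕ, ∃ x y χ, ((x = i ∧ y = j) ∨ (x = j ∧ y = i))
      ∧ cs.IsReduced (myAlt x y m ++ χ) ∧ w = cs.wordProd (myAlt x y m ++ χ) := by
    intro m
    induction m with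
    | zero =>
        obtain ⟨χ, hχred, hχ⟩ := cs.exists_reduced_word' w
        exact ⟨i, j, χ, Or.inl ⟨rfl, rfl⟩, by simpa [myAlt] using hχred, by simpa [myAlt] using hχ⟩
    | succ m ih =>
        obtain ⟨x, y, χ, hxy, hred, hw⟩ := ih
        set ω := myAlt x y m ++ χ with hω
        have hdy : cs.IsLeftDescent w y := by
          rcases hxy with ⟨rfl, rfl⟩ | ⟨rfl, rfl⟩
          · exact dj
          · exact di
        obtain ⟨r, hr, herase, hentry⟩ := exchange cs hdy hred hw
        -- the index r is not inside the alternating prefix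
        have hrm : m ≤ r := by
          by_contra hcon
          push_neg at hcon
          have htake : ω.take r = myAlt x y r := by
            rw [hω, List.take_append_of_le_length (by rw [myAlt_length]; omega),
              myAlt_take (by omega)]
          have hgetr : ω[r]? = some (altL x y r) := by
            rw [hω, List.getElem?_append, myAlt_length, if_pos (by omega), myAlt_get hcon]
          have := cs.getD_leftInvSeq ω r
          rw [htake, hgetr] at this
          rw [hentry] at this
          simp only [Option.map_some, Option.getD_some] at this
          have hdih : (cs.simple x * cs.simple y) ^ r * cs.simple x = cs.simple y := by
            rw [← myAlt_entry cs r x y, ← this]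
          have hpow : (cs.simple x * cs.simple y) ^ (r + 1) = 1 := by
            have h1 : (cs.simple x * cs.simple y) ^ r = cs.simple y * cs.simple x := by
              have := hdih
              have h2 : (cs.simple x * cs.simple y) ^ r * cs.simple x * cs.simple x
                  = cs.simple y * cs.simple x := by rw [this]
              rwa [mul_assoc, cs.simple_mul_simple_self, mul_one] at h2
            rw [pow_succ, h1]
            calc cs.simple y * cs.simple x * (cs.simple x * cs.simple y)
                = cs.simple y * (cs.simple x * cs.simple x) * cs.simple y := by group
              _ = cs.simple y * cs.simple y := by rw [cs.simple_mul_simple_self]; group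
              _ = 1 := cs.simple_mul_simple_self y
          have := orderOf_dvd_of_pow_eq_one hpow
          rw [horder x y hxy] at this
          omega
        -- so the erased letter is inside χ
        obtain ⟨d, hd⟩ : ∃ d, r = m + d := ⟨r - m, by omega⟩
        have herase2 : ω.eraseIdx r = myAlt x y m ++ χ.eraseIdx d := by
          have haux := eraseIdx_append_right (myAlt x y m) χ d
          rw [myAlt_length] at haux
          rw [hω, hd, haux]
        have hχlen : d < χ.length := by
          have := hr
          rw [hω, List.length_append, myAlt_length] at this
          omega
        have hlw : cs.length w = ω.length := by rw [hw]; exact hred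
        have hχ'len : (χ.eraseIdx d).length + 1 = χ.length :=
          List.length_eraseIdx_add_one hχlen
        have hwnew : w = cs.wordProd (myAlt y x (m+1) ++ χ.eraseIdx d) := by
          have hstep : cs.wordProd (myAlt y x (m+1) ++ χ.eraseIdx d)
              = cs.simple y * cs.wordProd (myAlt x y m ++ χ.eraseIdx d) := by
            show cs.wordProd (y :: (myAlt x y m ++ χ.eraseIdx d)) = _
            rw [cs.wordProd_cons]
          rw [hstep, ← herase2, ← herase, cs.simple_mul_simple_cancel_left]
        refine ⟨y, x, χ.eraseIdx d, by tauto, ?_, hwnew⟩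
        unfold CoxeterSystem.IsReduced
        rw [← hwnew, List.length_append, myAlt_length, hlw, hω, List.length_append,
          myAlt_length]
        omega
  obtain ⟨x, y, χ, hxy, hred, hw⟩ := key (cs.length w + 1)
  have : (myAlt x y (cs.length w + 1) ++ χ).length = cs.length w := by
    rw [← hred, ← hw]
  rw [List.length_append, myAlt_length] at this
  omega

end S16Aux

namespace S16Aux

open RAB

variable {B W : Type*} [Group W] {M : CoxeterMatrix B} {cs : CoxeterSystem M W}
variable {C : Type*} (X : RAB.Building cs C)

lemma simple_ne_one (k : B) : cs.simple k ≠ 1 := by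
  intro hk
  have h1 := cs.length_simple k
  rw [hk, cs.length_one] at h1
  omega

lemma delta_self (x : C) : X.δ x x = 1 := (X.delta_eq_one_iff x x).mpr rfl

lemma delta_symm {x y : C} {k : B} (hxy : X.δ x y = cs.simple k) :
    X.δ y x = cs.simple k := by
  rcases X.delta_mem_pair y x y k hxy with h1 | h1
  · exfalso
    rw [delta_self] at h1
    have hyx : y = x := (X.delta_eq_one_iff y x).mp h1.symm
    rw [hyx, delta_self] at hxy
    exact simple_ne_one k hxy.symm
  · rw [delta_self] at h1
    have h2 : X.δ y x * cs.simple k = 1 := h1.symm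
    have h3 : X.δ y x = (cs.simple k)⁻¹ := mul_eq_one_iff_eq_inv.mp h2
    rw [h3, cs.inv_simple]

lemma mem_closure_simple_iff {k : B} {w : W} :
    w ∈ Subgroup.closure (cs.simple '' ({k} : Set B)) ↔ w = 1 ∨ w = cs.simple k := by
  rw [Set.image_singleton, Subgroup.mem_closure_singleton]
  have h2 : cs.simple k ^ (2 : ℤ) = 1 := by
    rw [show (2:ℤ) = ((2:ℕ):ℤ) from rfl, zpow_natCast, cs.simple_sq]
  constructor
  · rintro ⟨n, rfl⟩
    rcases Int.even_or_odd n with ⟨q, hq⟩ | ⟨q, hq⟩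
    · left
      rw [hq, show q + q = 2 * q by ring, zpow_mul, h2, one_zpow]
    · right
      rw [hq, zpow_add, zpow_mul, h2, one_zpow, one_mul, zpow_one]
  · rintro (rfl | rfl)
    · exact ⟨0, by simp⟩
    · exact ⟨1, by simp⟩

lemma mem_res_iff {e x : C} {k : B} :
    x ∈ X.Res {k} e ↔ X.δ e x = 1 ∨ X.δ e x = cs.simple k := by
  show X.δ e x ∈ Subgroup.closure _ ↔ _
  exact mem_closure_simple_iff

lemma self_mem_res (e : C) (k : B) : e ∈ X.Res {k} e := by
  rw [mem_res_iff]
  left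
  exact delta_self X e

lemma isProj_unique {R : Set C} {x p p' : C} (hp : X.IsProj R x p)
    (hp' : X.IsProj R x p') : p = p' := by
  by_contra hne
  have h1 := hp.2 p' hp'.1 (fun he => hne he.symm)
  have h2 := hp'.2 p hp.1 hne
  omega

lemma proj_eq {R : Set C} {x p : C} (hp : X.IsProj R x p) : X.proj R x = p := by
  unfold RAB.Building.proj
  rw [dif_pos ⟨p, hp⟩]
  exact isProj_unique X (Exists.choose_spec (⟨p, hp⟩ : ∃ q, X.IsProj R x q)) hp

/-- Characterisation of wings: `x` lies in the `k`-wing of `e` iff `k` is not a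
right descent of `δ x e`. -/
lemma mem_wing_iff {e x : C} {k : B} :
    x ∈ X.wing {k} e ↔ ¬ cs.IsRightDescent (X.δ x e) k := by
  constructor
  · -- if descent, then x not in wing
    intro hx
    intro hdesc
    obtain ⟨z, hz1, hz2⟩ := X.exists_delta x e k
    have hzne : z ≠ e := by
      intro hze
      rw [hze, delta_self] at hz1
      exact simple_ne_one k hz1.symm
    have hproj : X.IsProj (X.Res {k} e) x z := by
      constructor
      · rw [mem_res_iff]; right; exact hz1
      · intro u hu hne
        rw [mem_res_iff] at hu
        rcases hu with hu | hu
        · have hue : u = e := ((X.delta_eq_one_iff e u).mp hu).symm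
          subst hue
          show X.dist x z < X.dist x u
          unfold RAB.Building.dist
          rw [hz2]
          have := cs.isRightDescent_iff.mp hdesc
          omega
        · -- δ e u = s k, u ≠ z
          have hzu : X.δ z u = cs.simple k := by
            rcases X.delta_mem_pair z e u k hu with h1 | h1
            · rw [delta_symm X hz1] at h1
              exact h1
            · rw [delta_symm X hz1, cs.simple_mul_simple_self] at h1
              exfalso
              exact hne ((X.delta_eq_one_iff z u).mp h1).symm
          have hxu : X.δ x u = X.δ x e := by
            have hlen : cs.length (X.δ x z * cs.simple k) = cs.length (X.δ x z) + 1 := by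
              rw [hz2, cs.simple_mul_simple_cancel_right]
              have := cs.isRightDescent_iff.mp hdesc
              omega
            have := X.delta_eq_of_length x z u k hzu hlen
            rw [this, hz2, cs.simple_mul_simple_cancel_right]
          show X.dist x z < X.dist x u
          unfold RAB.Building.dist
          rw [hxu, hz2]
          have := cs.isRightDescent_iff.mp hdesc
          omega
    have : X.proj (X.Res {k} e) x = z := proj_eq X hproj
    have hwx : X.proj (X.Res {k} e) x = e := hx
    rw [hwx] at this
    exact hzne this.symm
  · -- if not descent, then x in wing
    intro hdesc
    have hproj : X.IsProj (X.Res {k} e) x e := by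
      constructor
      · exact self_mem_res X e k
      · intro u hu hne
        rw [mem_res_iff] at hu
        rcases hu with hu | hu
        · exact absurd ((X.delta_eq_one_iff e u).mp hu).symm hne
        · have hlen : cs.length (X.δ x e * cs.simple k) = cs.length (X.δ x e) + 1 :=
            cs.not_isRightDescent_iff.mp hdesc
          have hxu := X.delta_eq_of_length x e u k hu hlen
          show X.dist x e < X.dist x u
          unfold RAB.Building.dist
          rw [hxu, hlen]
          omega
    show X.proj (X.Res {k} e) x = e
    exact proj_eq X hproj

lemma noTwoRightDescents {i j : B} (hij : orderOf (cs.simple i * cs.simple j) = 0)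
    (w : W) : ¬(cs.IsRightDescent w i ∧ cs.IsRightDescent w j) := by
  rintro ⟨d1, d2⟩
  exact noTwoLeftDescents cs hij w⁻¹
    ⟨cs.isLeftDescent_inv_iff.mpr d1, cs.isLeftDescent_inv_iff.mpr d2⟩

/-- wings nest across panels with `m = ∞`. -/
lemma wing_mono {a b : C} {k l : B} (hab : X.δ a b = cs.simple k)
    (ho : orderOf (cs.simple l * cs.simple k) = 0) :
    X.wing {k} b ⊆ X.wing {l} a := by
  intro x hx
  rw [mem_wing_iff] at hx ⊢
  have hba : X.δ b a = cs.simple k := delta_symm X hab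
  have hxa : X.δ x a = X.δ x b * cs.simple k :=
    X.delta_eq_of_length x b a k hba (cs.not_isRightDescent_iff.mp hx)
  have hdk : cs.IsRightDescent (X.δ x a) k := by
    unfold CoxeterSystem.IsRightDescent
    rw [hxa, cs.simple_mul_simple_cancel_right]
    have h2 := cs.not_isRightDescent_iff.mp hx
    omega
  intro hdl
  exact noTwoRightDescents ho (X.δ x a) ⟨hdl, hdk⟩

lemma mem_wing_of_not_mem_wing {e x : C} {k l : B}
    (ho : orderOf (cs.simple k * cs.simple l) = 0) (hx : x ∉ X.wing {k} e) :
    x ∈ X.wing {l} e := by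
  rw [mem_wing_iff] at hx ⊢
  rw [not_not] at hx
  intro hdl
  exact noTwoRightDescents ho (X.δ x e) ⟨hx, hdl⟩

lemma delta_eq_simple_of_mem_res {z c c' : C} {k : B} (hc : c ∈ X.Res {k} z)
    (hc' : c' ∈ X.Res {k} z) (hne : c ≠ c') : X.δ c c' = cs.simple k := by
  rw [mem_res_iff] at hc hc'
  have hne' : X.δ c c' ≠ 1 := fun h1 => hne ((X.delta_eq_one_iff c c').mp h1)
  rcases hc with hc | hc
  · -- c = z
    have hcz : c = z := ((X.delta_eq_one_iff z c).mp hc).symm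
    subst hcz
    rcases hc' with hc' | hc'
    · exact absurd hc' hne'
    · exact hc'
  · -- δ z c = s k hence δ c z = s k
    have hcz : X.δ c z = cs.simple k := delta_symm X hc
    rcases hc' with hc' | hc'
    · have hz : c' = z := ((X.delta_eq_one_iff z c').mp hc').symm
      subst hz
      exact hcz
    · rcases X.delta_mem_pair c z c' k hc' with h1 | h1
      · rw [hcz] at h1; exact h1
      · rw [hcz, cs.simple_mul_simple_self] at h1
        exact absurd h1 hne'

lemma perm_apply_inv_self {α : Type*} (f : Equiv.Perm α) (x : α) : f (f⁻¹ x) = x :=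
  f.apply_symm_apply x

lemma perm_inv_apply_self {α : Type*} (f : Equiv.Perm α) (x : α) : f⁻¹ (f x) = x :=
  f.symm_apply_apply x

lemma mem_autPlus_iff {g : Equiv.Perm C} :
    g ∈ X.autPlus ↔ ∀ x y : C, X.δ (g x) (g y) = X.δ x y := Iff.rfl

end S16Aux

/-- Tits' commutator trick: the element `h`, supported on the union of the
wings `X_i(d)` for `d ∈ σ \ {c, c'}`, is a commutator `[x, g]`. -/
theorem statement16 {B W C : Type*} [Fintype B] [Group W] {M : CoxeterMatrix B}
    (cs : CoxeterSystem M W) (X : RAB.Building cs C) (hra : RAB.IsRightAngled cs)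
    (i : B) (σ : Set C) (hσ : X.IsResidueOfType {i} σ)
    (c c' : C) (hc : c ∈ σ) (hc' : c' ∈ σ) (hcc' : c ≠ c')
    (g : Equiv.Perm C) (hg : g ∈ X.autPlus) (j : B)
    (hij : orderOf (cs.simple i * cs.simple j) = 0)
    (hgc : X.δ c' (g c) = cs.simple j)
    (h : Equiv.Perm C) (hh : h ∈ X.autPlus)
    (hfix : ∀ x ∈ X.wing {i} c ∪ X.wing {i} c', h x = x)
    (hprod : ∀ d ∈ σ \ {c, c'}, ∃ hd ∈ X.V i d, ∀ x ∈ X.wing {i} d, hd x = h x) :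
    ∃ x ∈ X.autPlus, h = x * g * x⁻¹ * g⁻¹ := by
  classical
  obtain ⟨z, hz⟩ := hσ
  have hgdel : ∀ x y : C, X.δ (g x) (g y) = X.δ x y := hg
  have hδcc' : X.δ c c' = cs.simple i := by
    rw [hz] at hc hc'
    exact S16Aux.delta_eq_simple_of_mem_res X hc hc' hcc'
  have hlij : cs.length (cs.simple i * cs.simple j) = 2 := by
    have hle := cs.length_mul_le (cs.simple i) (cs.simple j)
    rw [cs.length_simple, cs.length_simple] at hle
    have hmod := cs.length_mul_mod_two (cs.simple i) (cs.simple j)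
    rw [cs.length_simple, cs.length_simple] at hmod
    have hne0 : cs.length (cs.simple i * cs.simple j) ≠ 0 := by
      intro h0
      have h1 : cs.simple i * cs.simple j = 1 := cs.length_eq_zero_iff.mp h0
      rw [h1, orderOf_one] at hij
      omega
    omega
  have hδcgc : X.δ c (g c) = cs.simple i * cs.simple j := by
    have hstep := X.delta_eq_of_length c c' (g c) j hgc
      (by rw [hδcc', cs.length_simple, hlij])
    rw [hstep, hδcc']
  have hδgcg2c : X.δ (g c) (g (g c)) = cs.simple i * cs.simple j := by
    rw [hgdel]; exact hδcgc
  obtain ⟨e, he1, he2⟩ := X.exists_delta (g c) (g (g c)) j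
  rw [hδgcg2c] at he2
  have he2' : X.δ (g c) e = cs.simple i := by
    rw [he2, cs.simple_mul_simple_cancel_right]
  have hoji : orderOf (cs.simple j * cs.simple i) = 0 := by
    have hsc : SemiconjBy (cs.simple i) (cs.simple j * cs.simple i)
        (cs.simple i * cs.simple j) := by unfold SemiconjBy; group
    rw [hsc.orderOf_eq (cs.simple i)]; exact hij
  set A : Set C := (X.wing {i} c ∪ X.wing {i} c')ᶜ with hA
  set Y : Set C := X.wing {j} (g c) with hY
  have hYc' : Y ⊆ X.wing {i} c' := S16Aux.wing_mono X hgc hij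
  have hY3a : X.wing {j} (g (g c)) ⊆ X.wing {i} e :=
    S16Aux.wing_mono X (S16Aux.delta_symm X he1) hij
  have hY3b : X.wing {i} e ⊆ X.wing {j} (g c) := S16Aux.wing_mono X he2' hoji
  have hgA : ∀ y ∈ A, g y ∈ Y := by
    intro y hy
    have hyc : y ∉ X.wing {i} c := fun hmem => hy (Or.inl hmem)
    rw [S16Aux.mem_wing_iff] at hyc
    rw [not_not] at hyc
    rw [hY, S16Aux.mem_wing_iff, hgdel]
    intro hdj
    exact S16Aux.noTwoRightDescents hij (X.δ y c) ⟨hyc, hdj⟩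
  have hgY : ∀ y ∈ Y, g y ∈ Y := by
    intro y hy
    apply hY3b
    apply hY3a
    rw [S16Aux.mem_wing_iff, hgdel]
    rw [hY, S16Aux.mem_wing_iff] at hy
    exact hy
  have hYA : ∀ y ∈ Y, y ∉ A := by
    intro y hy hyA
    exact hyA (Or.inr (hYc' hy))
  have hgnA : ∀ n : ℕ, ∀ y ∈ A, (g ^ (n + 1)) y ∈ Y := by
    intro n
    induction n with
    | zero =>
        intro y hy
        rw [pow_one]
        exact hgA y hy
    | succ n ih =>
        intro y hy
        have hpow : g ^ (n + 1 + 1) = g * g ^ (n + 1) := by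
          rw [← pow_succ']
        rw [hpow, Equiv.Perm.mul_apply]
        exact hgY _ (ih y hy)
  have hPuniq : ∀ (n m : ℕ) (y : C), (g ^ n)⁻¹ y ∈ A → (g ^ m)⁻¹ y ∈ A → n = m := by
    have haux : ∀ n m : ℕ, n < m → ∀ y : C,
        (g ^ n)⁻¹ y ∈ A → (g ^ m)⁻¹ y ∈ A → False := by
      intro n m hnm y hn hm
      obtain ⟨k, rfl⟩ : ∃ k, m = n + (k + 1) := ⟨m - n - 1, by omega⟩
      have hperm : g ^ (k + 1) * (g ^ (n + (k + 1)))⁻¹ = (g ^ n)⁻¹ := by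
        rw [pow_add]; group
      have happ : (g ^ (k + 1)) ((g ^ (n + (k + 1)))⁻¹ y) = (g ^ n)⁻¹ y := by
        rw [← Equiv.Perm.mul_apply, hperm]
      have hmem := hgnA k _ hm
      rw [happ] at hmem
      exact hYA _ hmem hn
    intro n m y hn hm
    rcases lt_trichotomy n m with hlt | heq | hgt
    · exact (haux n m hlt y hn hm).elim
    · exact heq
    · exact (haux m n hgt y hm hn).elim
  have hsupp : ∀ y : C, y ∉ A → h y = y := by
    intro y hy
    rw [hA, Set.notMem_compl_iff] at hy
    exact hfix y hy
  have hhA : ∀ y ∈ A, h y ∈ A := by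
    intro y hy
    by_contra hmem
    have h1 := hsupp _ hmem
    have h2 : h y = y := h.injective h1
    rw [h2] at hmem
    exact hmem hy
  have hhinvA : ∀ y ∈ A, h⁻¹ y ∈ A := by
    intro y hy
    by_contra hmem
    have h1 := hsupp _ hmem
    rw [S16Aux.perm_apply_inv_self] at h1
    rw [← h1] at hmem
    exact hmem hy
  -- the conjugating permutation
  set F : C → C := fun y => if hy : ∃ n : ℕ, (g ^ n)⁻¹ y ∈ A then
      (g ^ hy.choose) (h ((g ^ hy.choose)⁻¹ y)) else y with hF
  set Finv : C → C := fun y => if hy : ∃ n : ℕ, (g ^ n)⁻¹ y ∈ A then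
      (g ^ hy.choose) (h⁻¹ ((g ^ hy.choose)⁻¹ y)) else y with hFinv
  have hFeval : ∀ (n : ℕ) (y : C), (g ^ n)⁻¹ y ∈ A →
      F y = (g ^ n) (h ((g ^ n)⁻¹ y)) := by
    intro n y hn
    have hy : ∃ m : ℕ, (g ^ m)⁻¹ y ∈ A := ⟨n, hn⟩
    simp only [hF]
    rw [dif_pos hy]
    have hcn : hy.choose = n := hPuniq _ _ _ hy.choose_spec hn
    rw [hcn]
  have hFinveval : ∀ (n : ℕ) (y : C), (g ^ n)⁻¹ y ∈ A →
      Finv y = (g ^ n) (h⁻¹ ((g ^ n)⁻¹ y)) := by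
    intro n y hn
    have hy : ∃ m : ℕ, (g ^ m)⁻¹ y ∈ A := ⟨n, hn⟩
    simp only [hFinv]
    rw [dif_pos hy]
    have hcn : hy.choose = n := hPuniq _ _ _ hy.choose_spec hn
    rw [hcn]
  have hFfix : ∀ y : C, ¬(∃ n : ℕ, (g ^ n)⁻¹ y ∈ A) → F y = y := by
    intro y hy
    simp only [hF]
    rw [dif_neg hy]
  have hFinvfix : ∀ y : C, ¬(∃ n : ℕ, (g ^ n)⁻¹ y ∈ A) → Finv y = y := by
    intro y hy
    simp only [hFinv]
    rw [dif_neg hy]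
  have hlr : Function.LeftInverse Finv F := by
    intro y
    by_cases hy : ∃ n : ℕ, (g ^ n)⁻¹ y ∈ A
    · obtain ⟨n, hn⟩ := hy
      rw [hFeval n y hn]
      have hn' : (g ^ n)⁻¹ ((g ^ n) (h ((g ^ n)⁻¹ y))) ∈ A := by
        rw [S16Aux.perm_inv_apply_self]
        exact hhA _ hn
      rw [hFinveval n _ hn', S16Aux.perm_inv_apply_self, S16Aux.perm_inv_apply_self,
        S16Aux.perm_apply_inv_self]
    · rw [hFfix y hy, hFinvfix y hy]
  have hrl : Function.RightInverse Finv F := by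
    intro y
    by_cases hy : ∃ n : ℕ, (g ^ n)⁻¹ y ∈ A
    · obtain ⟨n, hn⟩ := hy
      rw [hFinveval n y hn]
      have hn' : (g ^ n)⁻¹ ((g ^ n) (h⁻¹ ((g ^ n)⁻¹ y))) ∈ A := by
        rw [S16Aux.perm_inv_apply_self]
        exact hhinvA _ hn
      rw [hFeval n _ hn', S16Aux.perm_inv_apply_self, S16Aux.perm_apply_inv_self,
        S16Aux.perm_apply_inv_self]
    · rw [hFinvfix y hy, hFfix y hy]
  set x : Equiv.Perm C := ⟨F, Finv, hlr, hrl⟩ with hx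
  have hx1 : ∀ u : C, x u = F u := fun u => rfl
  have hx2 : ∀ u : C, x⁻¹ u = Finv u := fun u => rfl
  have hconjdel : ∀ (n : ℕ) (u v : C),
      X.δ ((g ^ n) (h ((g ^ n)⁻¹ u))) ((g ^ n) (h ((g ^ n)⁻¹ v))) = X.δ u v := by
    intro n u v
    have hmem : (g ^ n * h * (g ^ n)⁻¹) ∈ X.autPlus :=
      mul_mem (mul_mem (pow_mem hg n) hh) (inv_mem (pow_mem hg n))
    have := (S16Aux.mem_autPlus_iff X).mp hmem u v
    simpa [Equiv.Perm.mul_apply] using this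
  have hconjfix : ∀ (n : ℕ) (u : C), (g ^ n)⁻¹ u ∉ A →
      (g ^ n) (h ((g ^ n)⁻¹ u)) = u := by
    intro n u hu
    rw [hsupp _ hu, S16Aux.perm_apply_inv_self]
  have hxmem : x ∈ X.autPlus := by
    rw [S16Aux.mem_autPlus_iff]
    intro u v
    rw [hx1, hx1]
    by_cases hu : ∃ n : ℕ, (g ^ n)⁻¹ u ∈ A
    · obtain ⟨n, hn⟩ := hu
      rw [hFeval n u hn]
      by_cases hv : ∃ m : ℕ, (g ^ m)⁻¹ v ∈ A
      · obtain ⟨m, hm⟩ := hv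
        rw [hFeval m v hm]
        by_cases hnm : n = m
        · subst hnm
          exact hconjdel n u v
        · have hFuA : (g ^ m)⁻¹ ((g ^ n) (h ((g ^ n)⁻¹ u))) ∉ A := by
            intro hmem
            have hnn : (g ^ n)⁻¹ ((g ^ n) (h ((g ^ n)⁻¹ u))) ∈ A := by
              rw [S16Aux.perm_inv_apply_self]
              exact hhA _ hn
            exact hnm (hPuniq n m _ hnn hmem)
          have hvn : (g ^ n)⁻¹ v ∉ A := by
            intro hmem
            exact hnm (hPuniq n m v hmem hm)
          calc X.δ ((g ^ n) (h ((g ^ n)⁻¹ u))) ((g ^ m) (h ((g ^ m)⁻¹ v)))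
              = X.δ ((g ^ m) (h ((g ^ m)⁻¹ ((g ^ n) (h ((g ^ n)⁻¹ u))))))
                  ((g ^ m) (h ((g ^ m)⁻¹ v))) := by
                rw [hconjfix m _ hFuA]
            _ = X.δ ((g ^ n) (h ((g ^ n)⁻¹ u))) v := hconjdel m _ v
            _ = X.δ ((g ^ n) (h ((g ^ n)⁻¹ u))) ((g ^ n) (h ((g ^ n)⁻¹ v))) := by
                rw [hconjfix n v hvn]
            _ = X.δ u v := hconjdel n u v
      · have hvn : (g ^ n)⁻¹ v ∉ A := fun hmem => hv ⟨n, hmem⟩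
        rw [hFfix v hv]
        calc X.δ ((g ^ n) (h ((g ^ n)⁻¹ u))) v
            = X.δ ((g ^ n) (h ((g ^ n)⁻¹ u))) ((g ^ n) (h ((g ^ n)⁻¹ v))) := by
              rw [hconjfix n v hvn]
          _ = X.δ u v := hconjdel n u v
    · rw [hFfix u hu]
      by_cases hv : ∃ m : ℕ, (g ^ m)⁻¹ v ∈ A
      · obtain ⟨m, hm⟩ := hv
        rw [hFeval m v hm]
        have hun : (g ^ m)⁻¹ u ∉ A := fun hmem => hu ⟨m, hmem⟩
        calc X.δ u ((g ^ m) (h ((g ^ m)⁻¹ v)))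
            = X.δ ((g ^ m) (h ((g ^ m)⁻¹ u))) ((g ^ m) (h ((g ^ m)⁻¹ v))) := by
              rw [hconjfix m u hun]
          _ = X.δ u v := hconjdel m u v
      · rw [hFfix v hv]
  refine ⟨x, hxmem, ?_⟩
  ext y
  show h y = (x * g * x⁻¹ * g⁻¹) y
  simp only [Equiv.Perm.mul_apply]
  rw [hx2, hx1]
  have hshift : ∀ (n : ℕ) (u : C), (g ^ n)⁻¹ (g⁻¹ u) = (g ^ (n + 1))⁻¹ u := by
    intro n u
    rw [← Equiv.Perm.mul_apply]
    congr 1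
    rw [pow_succ']
    group
  by_cases hyA : y ∈ A
  · have hP0 : (g ^ (0 : ℕ))⁻¹ y ∈ A := by simpa using hyA
    have hnoginv : ¬(∃ n : ℕ, (g ^ n)⁻¹ (g⁻¹ y) ∈ A) := by
      rintro ⟨n, hn⟩
      rw [hshift n y] at hn
      have := hPuniq (n + 1) 0 y hn hP0
      omega
    rw [hFinvfix _ hnoginv, S16Aux.perm_apply_inv_self, hFeval 0 y hP0]
    simp
  · by_cases hy : ∃ n : ℕ, (g ^ n)⁻¹ y ∈ A
    · obtain ⟨n, hn⟩ := hy
      have hn0 : n ≠ 0 := by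
        intro h0
        rw [h0] at hn
        simp at hn
        exact hyA hn
      obtain ⟨k, rfl⟩ : ∃ k, n = k + 1 := ⟨n - 1, by omega⟩
      rw [hsupp y hyA]
      have hk : (g ^ k)⁻¹ (g⁻¹ y) ∈ A := by
        rw [hshift k y]
        exact hn
      rw [hFinveval k _ hk, hshift k y]
      have hgstep : g ((g ^ k) (h⁻¹ ((g ^ (k + 1))⁻¹ y)))
          = (g ^ (k + 1)) (h⁻¹ ((g ^ (k + 1))⁻¹ y)) := by
        rw [← Equiv.Perm.mul_apply, ← pow_succ']
      rw [hgstep]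
      have hv : (g ^ (k + 1))⁻¹ ((g ^ (k + 1)) (h⁻¹ ((g ^ (k + 1))⁻¹ y))) ∈ A := by
        rw [S16Aux.perm_inv_apply_self]
        exact hhinvA _ hn
      rw [hFeval (k + 1) _ hv, S16Aux.perm_inv_apply_self, S16Aux.perm_apply_inv_self,
        S16Aux.perm_apply_inv_self]
    · rw [hsupp y hyA]
      have hnoginv : ¬(∃ n : ℕ, (g ^ n)⁻¹ (g⁻¹ y) ∈ A) := by
        rintro ⟨n, hn⟩
        rw [hshift n y] at hn
        exact hy ⟨n + 1, hn⟩
      rw [hFinvfix _ hnoginv, S16Aux.perm_apply_inv_self, hFfix y hy]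
end
end

section
/- Let C be a set and let G be a subgroup of Sym(C). Let Y ⊆ C and let V be a subgroup of G each of whose elements fixes every point of C \ Y. Let a, b ∈ G be such that Y ∩ a(Y) = ∅ and Y ∩ b(Y) = ∅. If [a,v] commutes with [b,w] for all v, w ∈ V, then V is abelian. -/
open scoped commutatorElement

theorem Equiv.Perm.inv_apply_self {α : Type*} (f : Equiv.Perm α) (x : α) : f⁻¹ (f x) = x :=
  f.symm_apply_apply x

theorem Equiv.Perm.apply_inv_self {α : Type*} (f : Equiv.Perm α) (x : α) : f (f⁻¹ x) = x :=
  f.apply_symm_apply x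

/-- If `V` is supported on `Y`, the elements `a, b` move `Y` off itself
and all commutators `[a,v]`, `[b,w]` (`v, w ∈ V`) commute, then `V` is abelian. -/
theorem statement19 {C : Type*} (G : Subgroup (Equiv.Perm C)) (Y : Set C)
    (V : Subgroup (Equiv.Perm C)) (hVG : V ≤ G)
    (hsupp : ∀ v ∈ V, ∀ x ∉ Y, v x = x)
    (a b : Equiv.Perm C) (ha : a ∈ G) (hb : b ∈ G)
    (haY : Y ∩ (⇑a '' Y) = ∅) (hbY : Y ∩ (⇑b '' Y) = ∅)
    (hcomm : ∀ v ∈ V, ∀ w ∈ V, Commute ⁅a, v⁆ ⁅b, w⁆) :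
    ∀ v ∈ V, ∀ w ∈ V, v * w = w * v := by
  have hmap : ∀ v ∈ V, ∀ x ∈ Y, v x ∈ Y := by
    intro v hv x hx
    by_contra h
    have h1 := hsupp v⁻¹ (V.inv_mem hv) (v x) h
    simp only [Equiv.Perm.inv_apply_self] at h1
    exact h (h1 ▸ hx)
  have hAoff : ∀ x ∈ Y, a⁻¹ x ∉ Y := by
    intro x hx h
    have : x ∈ Y ∩ (⇑a '' Y) := ⟨hx, ⟨a⁻¹ x, h, by simp⟩⟩
    simp [haY] at this
  have hBoff : ∀ x ∈ Y, b⁻¹ x ∉ Y := by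
    intro x hx h
    have : x ∈ Y ∩ (⇑b '' Y) := ⟨hx, ⟨b⁻¹ x, h, by simp⟩⟩
    simp [hbY] at this
  have key : ∀ v ∈ V, ∀ w ∈ V, v⁻¹ * w⁻¹ = w⁻¹ * v⁻¹ := by
    intro v hv w hw
    ext x
    by_cases hx : x ∈ Y
    · have h := (hcomm v hv w hw).eq
      have h' := congrArg (fun p : Equiv.Perm C => p x) h
      simp only [commutatorElement_def, Equiv.Perm.mul_apply] at h'
      have hw1 : w⁻¹ x ∈ Y := hmap w⁻¹ (V.inv_mem hw) x hx
      have hv1 : v⁻¹ x ∈ Y := hmap v⁻¹ (V.inv_mem hv) x hx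
      have hvw : v⁻¹ (w⁻¹ x) ∈ Y := hmap v⁻¹ (V.inv_mem hv) _ hw1
      have hwv : w⁻¹ (v⁻¹ x) ∈ Y := hmap w⁻¹ (V.inv_mem hw) _ hv1
      rw [hsupp w hw _ (hBoff _ hw1), Equiv.Perm.apply_inv_self,
        hsupp v hv _ (hAoff _ hvw), Equiv.Perm.apply_inv_self,
        hsupp v hv _ (hAoff _ hv1), Equiv.Perm.apply_inv_self,
        hsupp w hw _ (hBoff _ hwv), Equiv.Perm.apply_inv_self] at h'
      simpa [Equiv.Perm.mul_apply] using h'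
    · simp [Equiv.Perm.mul_apply, hsupp v⁻¹ (V.inv_mem hv) x hx,
        hsupp w⁻¹ (V.inv_mem hw) x hx]
  intro v hv w hw
  have := key v⁻¹ (V.inv_mem hv) w⁻¹ (V.inv_mem hw)
  simpa using this
end
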